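/- Let R be an integral domain that is not a field, with the Macías topology on R \ {0}. If the Jacobson radical of R is zero, then the set of units U(R) is not open in this topology. -/

import Mathlib

/-- For nonzero `k`, the basic set `σₖ⁰ = {s ≠ 0 : ⟨k⟩ + ⟨s⟩ = R}` of the Macías topology. -/
def sigma0 (R : Type*) [CommRing R] (k : R) : Set {x : R // x ≠ 0} :=
  {s | Ideal.span {k} + Ideal.span {s.1} = ⊤}

/-- The Macías topology on `R \ {0}`, generated by the sets `σₖ⁰` for `k ≠ 0`. -/
def maciasTop (R : Type*) [CommRing R] : TopologicalSpace {x : R // x ≠ 0} :=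
  TopologicalSpace.generateFrom {U | ∃ k : R, k ≠ 0 ∧ U = sigma0 R k}

lemma sigma0_mul_subset (R : Type*) [CommRing R] (a b : R) :
    sigma0 R (a * b) ⊆ sigma0 R a := by
  intro s hs
  have hle : Ideal.span {a * b} ≤ Ideal.span ({a} : Set R) :=
    Ideal.span_singleton_le_span_singleton.mpr ⟨b, rfl⟩
  have : (⊤ : Ideal R) ≤ Ideal.span {a} + Ideal.span {s.1} := by
    rw [← hs]; exact add_le_add hle le_rfl
  exact top_le_iff.mp this

lemma sigma0_finite_inter (R : Type*) [CommRing R] [IsDomain R]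
    (f : Set (Set {x : R // x ≠ 0})) (hf : f.Finite)
    (hsub : f ⊆ {U | ∃ k : R, k ≠ 0 ∧ U = sigma0 R k}) :
    ∃ k : R, k ≠ 0 ∧ sigma0 R k ⊆ ⋂₀ f := by
  refine Set.Finite.induction_on (motive := fun f _ => f ⊆ {U | ∃ k : R, k ≠ 0 ∧ U = sigma0 R k} →
      ∃ k : R, k ≠ 0 ∧ sigma0 R k ⊆ ⋂₀ f) f hf (fun _ => ⟨1, one_ne_zero, by simp⟩)
      ?_ hsub
  intro U f' _ _ ih hsub'
  obtain ⟨k', hk', hk'sub⟩ := ih (fun V hV => hsub' (Set.mem_insert_of_mem _ hV))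
  obtain ⟨kU, hkU, hU⟩ := hsub' (Set.mem_insert _ _)
  subst hU
  refine ⟨kU * k', mul_ne_zero hkU hk', ?_⟩
  rw [Set.sInter_insert]
  intro s hs
  exact ⟨sigma0_mul_subset R kU k' hs,
    hk'sub (by rw [mul_comm] at hs; exact sigma0_mul_subset R k' kU hs)⟩

theorem stmt7 (R : Type*) [CommRing R] [IsDomain R] (hnf : ¬ IsField R)
    (hJ : (⊥ : Ideal R).jacobson = ⊥) :
    ¬ @IsOpen _ (maciasTop R) {x : {x : R // x ≠ 0} | IsUnit x.1} := by
  letI : TopologicalSpace {x : R // x ≠ 0} := maciasTop R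
  intro hopen
  have hbasis := TopologicalSpace.isTopologicalBasis_of_subbasis (t := maciasTop R)
    (s := {U | ∃ k : R, k ≠ 0 ∧ U = sigma0 R k}) rfl
  have hone : (⟨1, one_ne_zero⟩ : {x : R // x ≠ 0}) ∈
      {x : {x : R // x ≠ 0} | IsUnit x.1} := isUnit_one
  obtain ⟨V, hV, hxV, hVsub⟩ := hbasis.exists_subset_of_mem_open hone hopen
  obtain ⟨f, ⟨hfin, hfsub⟩, rfl⟩ := hV
  obtain ⟨k, hk, hksub⟩ := sigma0_finite_inter R f hfin hfsub
  have hsub : sigma0 R k ⊆ {x : {x : R // x ≠ 0} | IsUnit x.1} :=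
    fun s hs => hVsub (hksub hs)
  -- k cannot be a unit, otherwise every nonzero element is a unit and R is a field
  have hknu : ¬ IsUnit k := by
    intro hku
    apply hnf
    refine ⟨exists_pair_ne R, mul_comm, fun {a} ha => ?_⟩
    have : (⟨a, ha⟩ : {x : R // x ≠ 0}) ∈ sigma0 R k := by
      show Ideal.span {k} + Ideal.span {a} = ⊤
      rw [Ideal.span_singleton_eq_top.mpr hku]
      simp
    exact isUnit_iff_exists_inv.mp (hsub this)
  -- k is in the Jacobson radical
  have hkj : k ∈ (⊥ : Ideal R).jacobson := by
    rw [Ideal.mem_jacobson_bot]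
    intro y
    have hne : k * y + 1 ≠ 0 := by
      intro h0
      exact hknu ⟨⟨k, -y, by linear_combination -h0, by linear_combination -h0⟩, rfl⟩
    have : (⟨k * y + 1, hne⟩ : {x : R // x ≠ 0}) ∈ sigma0 R k := by
      show Ideal.span {k} + Ideal.span {k * y + 1} = ⊤
      rw [Ideal.eq_top_iff_one]
      have h1 : k * (-y) ∈ Ideal.span ({k} : Set R) :=
        Ideal.mem_span_singleton.mpr ⟨-y, rfl⟩
      have h2 : (k * y + 1 : R) ∈ Ideal.span ({k * y + 1} : Set R) :=
        Ideal.mem_span_singleton_self _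
      have := Submodule.add_mem_sup h1 h2
      rw [Submodule.add_eq_sup]
      convert this using 1
      ring
    exact hsub this
  rw [hJ, Ideal.mem_bot] at hkj
  exact hk hkj
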